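/- Let F be a finite field, d ≥ 1, T a linear transformation of F^d, and v ∈ F^d nonzero. The sequence ⟨T^n(v)⟩_{n≥0} has period |F|^d - 1 (i.e., T^{|F|^d - 1}(v) = v and T^k(v) ≠ v for 0 < k < |F|^d - 1) for every nonzero v if and only if the characteristic polynomial of T is primitive over F. -/

import Mathlib

set_option maxHeartbeats 1000000


open Polynomial Matrix

private lemma mulVec_eq_zero_of_isUnit {F : Type*} [Field F] {d : ℕ}
    {M : Matrix (Fin d) (Fin d) F} (h : IsUnit M) {x : Fin d → F}
    (hx : M.mulVec x = 0) : x = 0 := by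
  obtain ⟨u, rfl⟩ := h
  have h3 : ((u⁻¹ : _ˣ) : Matrix (Fin d) (Fin d) F).mulVec ((u : Matrix (Fin d) (Fin d) F).mulVec x) = x := by
    rw [Matrix.mulVec_mulVec, Units.inv_mul, Matrix.one_mulVec]
  rw [hx, Matrix.mulVec_zero] at h3
  exact h3.symm

theorem max_period_iff_primitive {F : Type*} [Field F] [Fintype F] {d : ℕ} (hd : 1 ≤ d)
    (T : Matrix (Fin d) (Fin d) F) :
    (∀ v : Fin d → F, v ≠ 0 →
        (T ^ (Fintype.card F ^ d - 1)).mulVec v = v ∧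
        ∀ k : ℕ, 0 < k → k < Fintype.card F ^ d - 1 → (T ^ k).mulVec v ≠ v) ↔
      (Irreducible T.charpoly ∧
        orderOf (AdjoinRoot.root T.charpoly) = Fintype.card F ^ d - 1) := by
  classical
  have hq : 2 ≤ Fintype.card F := Fintype.one_lt_card
  set N := Fintype.card F ^ d - 1 with hNdef
  have hN : 0 < N := by
    have h2 : 2 ^ d ≤ Fintype.card F ^ d := Nat.pow_le_pow_left hq d
    have h2d : 2 ≤ 2 ^ d := by
      calc 2 = 2 ^ 1 := rfl
      _ ≤ 2 ^ d := Nat.pow_le_pow_right (by norm_num) hd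
    omega
  have hfdeg : T.charpoly.natDegree = d := by
    rw [Matrix.charpoly_natDegree_eq_dim, Fintype.card_fin]
  have hfmonic : T.charpoly.Monic := Matrix.charpoly_monic T
  have hf0 : T.charpoly ≠ 0 := hfmonic.ne_zero
  have hker : ∀ a ∈ Ideal.span {T.charpoly}, (Polynomial.aeval T).toRingHom a = 0 := by
    intro a ha
    rw [Ideal.mem_span_singleton] at ha
    obtain ⟨c, rfl⟩ := ha
    show aeval T (T.charpoly * c) = 0
    rw [_root_.map_mul, Matrix.aeval_self_charpoly, zero_mul]
  set φ : AdjoinRoot T.charpoly →+* Matrix (Fin d) (Fin d) F :=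
    Ideal.Quotient.lift (Ideal.span {T.charpoly}) (Polynomial.aeval T).toRingHom hker with hφdef
  have hroot : φ (AdjoinRoot.root T.charpoly) = T := by
    show φ (AdjoinRoot.mk T.charpoly X) = T
    rw [hφdef]
    erw [Ideal.Quotient.lift_mk]
    exact Polynomial.aeval_X T
  constructor
  · intro h
    set v₀ : Fin d → F := fun _ => 1 with hv₀def
    have hv₀ : v₀ ≠ 0 := by
      intro h0
      have := congrFun h0 ⟨0, hd⟩
      simp [hv₀def] at this
    have hTN : T ^ N = 1 := by
      apply Matrix.toLin'.injective
      apply LinearMap.ext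
      intro v
      by_cases hv : v = 0
      · subst hv; simp [Matrix.toLin'_apply, Matrix.mulVec_zero]
      · rw [Matrix.toLin'_apply, Matrix.toLin'_apply, Matrix.one_mulVec]; exact (h v hv).1
    have hTunit : IsUnit T := by
      refine ⟨⟨T, T ^ (N - 1), ?_, ?_⟩, rfl⟩
      · rw [← pow_succ', Nat.sub_add_cancel hN]; exact hTN
      · rw [← pow_succ, Nat.sub_add_cancel hN]; exact hTN
    -- orbit of v₀ is everything nonzero
    have horb : ∀ w : Fin d → F, w ≠ 0 → ∃ k : ℕ, (T ^ k).mulVec v₀ = w := by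
      have hg0 : ∀ k : ℕ, (T ^ k).mulVec v₀ ≠ 0 := by
        intro k hk
        exact hv₀ (mulVec_eq_zero_of_isUnit (hTunit.pow k) hk)
      set g : Fin N → {w : Fin d → F // w ≠ 0} :=
        fun k => ⟨(T ^ (k : ℕ)).mulVec v₀, hg0 k⟩ with hgdef
      have key : ∀ i j : Fin N, (i : ℕ) < j → g i ≠ g j := by
        intro i j hij hgij
        have hvec : (T ^ (i : ℕ)).mulVec v₀ = (T ^ (j : ℕ)).mulVec v₀ :=
          congrArg Subtype.val hgij
        have hjN := j.isLt
        have h1 : (T ^ (N - (j : ℕ) + (i : ℕ))).mulVec v₀ = v₀ := by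
          rw [pow_add, ← Matrix.mulVec_mulVec, hvec, Matrix.mulVec_mulVec, ← pow_add,
            Nat.sub_add_cancel (le_of_lt hjN), hTN, Matrix.one_mulVec]
        exact (h v₀ hv₀).2 (N - j + i) (by omega) (by omega) h1
      have ginj : Function.Injective g := by
        intro i j hij
        rcases lt_trichotomy (i : ℕ) (j : ℕ) with hlt | heq | hgt
        · exact absurd hij (key i j hlt)
        · exact Fin.ext heq
        · exact absurd hij.symm (key j i hgt)
      have hcardS : Fintype.card {w : Fin d → F // w ≠ 0} = N := by
        have h1 : Fintype.card {w : Fin d → F // w = 0} = 1 := Fintype.card_subtype_eq 0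
        have h2 := Fintype.card_subtype_compl (fun w : Fin d → F => w = 0)
        rw [h1, Fintype.card_fun, Fintype.card_fin] at h2
        exact h2
      have gbij : Function.Bijective g :=
        (Fintype.bijective_iff_injective_and_card g).mpr ⟨ginj, by simp [hcardS]⟩
      intro w hw
      obtain ⟨k, hk⟩ := gbij.2 ⟨w, hw⟩
      exact ⟨k, congrArg Subtype.val hk⟩
    -- no polynomial of degree < d kills v₀
    have hC : ∀ p : F[X], p.natDegree < d → (aeval T p).mulVec v₀ = 0 → p = 0 := by
      intro p hpd hpv
      by_contra hp0
      set e := p.natDegree with hedef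
      have hrel : ∑ i ∈ Finset.range (e + 1), p.coeff i • (T ^ i).mulVec v₀ = 0 := by
        have h1 : Matrix.toLin' ((aeval T) p) v₀ = 0 := by
          rw [Matrix.toLin'_apply]; exact hpv
        rw [Polynomial.aeval_eq_sum_range, map_sum, LinearMap.sum_apply] at h1
        simpa only [map_smul, LinearMap.smul_apply, Matrix.toLin'_apply] using h1
      rcases Nat.eq_zero_or_pos e with he0 | hepos
      · have hpc : p = C (p.coeff 0) := Polynomial.eq_C_of_natDegree_eq_zero he0
        have hc0 : p.coeff 0 ≠ 0 := fun hc => hp0 (by rw [hpc, hc, map_zero])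
        rw [hpc, Polynomial.aeval_C, Algebra.algebraMap_eq_smul_one,
          Matrix.smul_mulVec, Matrix.one_mulVec] at hpv
        rcases smul_eq_zero.mp hpv with h' | h'
        · exact hc0 h'
        · exact hv₀ h'
      · set W := Submodule.span F (Set.range fun i : Fin e => (T ^ (i : ℕ)).mulVec v₀)
          with hWdef
        have hgen : ∀ i : Fin e, (T ^ (i : ℕ)).mulVec v₀ ∈ W :=
          fun i => Submodule.subset_span ⟨i, rfl⟩
        have hTe : (T ^ e).mulVec v₀ ∈ W := by
          rw [Finset.sum_range_succ] at hrel
          have hle : p.coeff e • (T ^ e).mulVec v₀ =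
              -∑ i ∈ Finset.range e, p.coeff i • (T ^ i).mulVec v₀ :=
            eq_neg_of_add_eq_zero_right hrel
          have hmem : ∑ i ∈ Finset.range e, p.coeff i • (T ^ i).mulVec v₀ ∈ W :=
            Submodule.sum_mem _ fun i hi =>
              Submodule.smul_mem _ _ (hgen ⟨i, Finset.mem_range.mp hi⟩)
          have h2 : p.coeff e • (T ^ e).mulVec v₀ ∈ W := by
            rw [hle]; exact Submodule.neg_mem _ hmem
          have hc : p.coeff e ≠ 0 := Polynomial.leadingCoeff_ne_zero.mpr hp0
          have h3 := W.smul_mem (p.coeff e)⁻¹ h2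
          rwa [inv_smul_smul₀ hc] at h3
        have hinv : ∀ w ∈ W, T.mulVec w ∈ W := by
          intro w hw
          induction hw using Submodule.span_induction with
          | mem x hx =>
              obtain ⟨i, rfl⟩ := hx
              rcases Nat.lt_or_ge ((i : ℕ) + 1) e with hlt | hge
              · have := hgen ⟨(i : ℕ) + 1, hlt⟩
                simpa [Matrix.mulVec_mulVec, pow_succ'] using this
              · have hie : (i : ℕ) + 1 = e := by have := i.isLt; omega
                rw [Matrix.mulVec_mulVec, ← pow_succ', hie]
                exact hTe
          | zero => simp [Matrix.mulVec_zero]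
          | add x y hx hy ihx ihy => rw [Matrix.mulVec_add]; exact W.add_mem ihx ihy
          | smul a x hx ihx => rw [Matrix.mulVec_smul]; exact W.smul_mem a ihx
        have hall : ∀ n : ℕ, (T ^ n).mulVec v₀ ∈ W := by
          intro n
          induction n with
          | zero => exact hgen ⟨0, hepos⟩
          | succ n ih =>
              have h2 : (T ^ (n + 1)).mulVec v₀ = T.mulVec ((T ^ n).mulVec v₀) := by
                rw [Matrix.mulVec_mulVec, ← pow_succ']
              rw [h2]; exact hinv _ ih
        have hWtop : W = ⊤ := by
          rw [eq_top_iff]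
          intro w _
          by_cases hw : w = 0
          · subst hw; exact W.zero_mem
          · obtain ⟨k, hk⟩ := horb w hw
            rw [← hk]; exact hall k
        have hrank : Module.finrank F (Fin d → F) ≤ e := by
          have hle1 : Module.finrank F W ≤ e := by
            have h2 := finrank_span_le_card (R := F)
              (Set.range fun i : Fin e => (T ^ (i : ℕ)).mulVec v₀)
            refine le_trans h2 ?_
            rw [Set.toFinset_range]
            exact le_trans (Finset.card_image_le) (by simp)
          calc Module.finrank F (Fin d → F)
              = Module.finrank F (⊤ : Submodule F (Fin d → F)) := (finrank_top _ _).symm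
            _ = Module.finrank F W := by rw [hWtop]
            _ ≤ e := hle1
        rw [Module.finrank_fin_fun] at hrank
        omega
    have hunit_of : ∀ r : F[X], r ≠ 0 → r.natDegree = 0 → IsUnit r := by
      intro r hr h0
      rw [Polynomial.eq_C_of_natDegree_eq_zero h0]
      refine Polynomial.isUnit_C.mpr (isUnit_iff_ne_zero.mpr ?_)
      intro hc
      exact hr (by rw [Polynomial.eq_C_of_natDegree_eq_zero h0, hc, map_zero])
    have hirr : Irreducible T.charpoly := by
      constructor
      · intro hu
        have := Polynomial.natDegree_eq_zero_of_isUnit hu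
        omega
      · intro a b hab
        have ha0 : a ≠ 0 := by rintro rfl; rw [zero_mul] at hab; exact hf0 hab
        have hb0 : b ≠ 0 := by rintro rfl; rw [mul_zero] at hab; exact hf0 hab
        have hdeg : a.natDegree + b.natDegree = d := by
          rw [← Polynomial.natDegree_mul ha0 hb0, ← hab, hfdeg]
        have hab' : (aeval T a) * (aeval T b) = 0 := by
          rw [← _root_.map_mul, ← hab, Matrix.aeval_self_charpoly]
        by_cases hw : (aeval T b).mulVec v₀ = 0
        · rcases Nat.lt_or_ge b.natDegree d with hlt | hge
          · exact absurd (hC b hlt hw) hb0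
          · exact Or.inl (hunit_of a ha0 (by omega))
        · obtain ⟨k, hk⟩ := horb _ hw
          have hcomm : T ^ k * aeval T a = aeval T a * T ^ k := by
            have h1 : aeval T (X ^ k * a) = aeval T (a * X ^ k) := by rw [mul_comm]
            rw [_root_.map_mul, _root_.map_mul, Polynomial.aeval_X_pow] at h1
            exact h1
          have h1 : (T ^ k).mulVec ((aeval T a).mulVec v₀) = 0 := by
            rw [Matrix.mulVec_mulVec, hcomm, ← Matrix.mulVec_mulVec, hk,
              Matrix.mulVec_mulVec, hab', Matrix.zero_mulVec]
          have h2 : (aeval T a).mulVec v₀ = 0 :=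
            mulVec_eq_zero_of_isUnit (hTunit.pow k) h1
          rcases Nat.lt_or_ge a.natDegree d with hlt | hge
          · exact absurd (hC a hlt h2) ha0
          · exact Or.inr (hunit_of b hb0 (by omega))
    haveI := Fact.mk hirr
    refine ⟨hirr, ?_⟩
    have hordT : orderOf T = N := by
      have hdvd : orderOf T ∣ N := orderOf_dvd_of_pow_eq_one hTN
      have hne : orderOf T ≠ 0 := by
        intro h0
        rw [h0] at hdvd
        have := Nat.eq_zero_of_zero_dvd hdvd
        omega
      have hle : orderOf T ≤ N := Nat.le_of_dvd hN hdvd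
      by_contra hne2
      have hlt : orderOf T < N := lt_of_le_of_ne hle hne2
      refine (h v₀ hv₀).2 (orderOf T) (Nat.pos_of_ne_zero hne) hlt ?_
      rw [pow_orderOf_eq_one, Matrix.one_mulVec]
    haveI : Nonempty (Fin d) := ⟨⟨0, hd⟩⟩
    have hinj : Function.Injective φ := φ.injective
    have horder := orderOf_injective φ.toMonoidHom hinj (AdjoinRoot.root T.charpoly)
    calc orderOf (AdjoinRoot.root T.charpoly)
        = orderOf (φ (AdjoinRoot.root T.charpoly)) := horder.symm
      _ = orderOf T := by rw [hroot]
      _ = N := hordT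
  · rintro ⟨hirr, hord⟩ v hv
    haveI := Fact.mk hirr
    have hTN : T ^ N = 1 := by
      have h1 : AdjoinRoot.root T.charpoly ^ N = 1 := by rw [← hord]; exact pow_orderOf_eq_one _
      calc T ^ N = φ (AdjoinRoot.root T.charpoly) ^ N := by rw [hroot]
        _ = φ (AdjoinRoot.root T.charpoly ^ N) := (map_pow φ _ _).symm
        _ = φ 1 := by rw [h1]
        _ = 1 := _root_.map_one φ
    constructor
    · rw [hTN, Matrix.one_mulVec]
    · intro k hk hkN hkv
      have hz : (T ^ k - 1).mulVec v = 0 := by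
        rw [Matrix.sub_mulVec, hkv, Matrix.one_mulVec, sub_self]
      have hne : AdjoinRoot.root T.charpoly ^ k - 1 ≠ 0 := by
        intro h0
        have h1 : AdjoinRoot.root T.charpoly ^ k = 1 := by rwa [sub_eq_zero] at h0
        have h2 := orderOf_dvd_of_pow_eq_one h1
        rw [hord] at h2
        have := Nat.le_of_dvd hk h2
        omega
      have hu : IsUnit (T ^ k - 1) := by
        have heq : φ (AdjoinRoot.root T.charpoly ^ k - 1) = T ^ k - 1 := by
          rw [map_sub, map_pow, hroot, _root_.map_one]
        rw [← heq]
        exact (isUnit_iff_ne_zero.mpr hne).map φ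
      exact hv (mulVec_eq_zero_of_isUnit hu hz)
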